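/- For every 1 ≤ i ≤ d one has t_k^* a_i^{(i)} = 0 for all k ≠ i, a_i^{(i)} t_k = 0 for all k < i, and P_j a_i^{(i)} = a_i^{(i)} for all j < i. -/
import Mathlib


/-- For `1 ≤ i ≤ d`: `tₖ* aᵢ⁽ⁱ⁾ = 0` for all `k ≠ i`,
`aᵢ⁽ⁱ⁾ tₖ = 0` for all `k < i`, and `P j * aᵢ⁽ⁱ⁾ = aᵢ⁽ⁱ⁾` for all `j < i`. -/
theorem a_ii_orthogonality {A : Type*} [CStarAlgebra A] [PartialOrder A] [StarOrderedRing A]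
    {d : ℕ} (hd : 0 < d) {μ : ℝ} (hμ₁ : -1 < μ) (hμ₂ : μ < 1)
    (t T P : ℕ → A) (a : ℕ → ℕ → A)
    (rel1 : ∀ i j, 1 ≤ i → i ≤ d → 1 ≤ j → j ≤ d → i ≠ j → star (t i) * t j = 0)
    (rel2 : ∀ i, 1 ≤ i → i ≤ d →
      star (t i) * t i = 1 - ∑ k ∈ Finset.Ico 1 i, t k * star (t k))
    (rel3 : ∀ i j, 1 ≤ i → i < j → j ≤ d → t j * t i = 0)
    (hP : ∀ j, P j = 1 - ∑ k ∈ Finset.Icc 1 j, t k * star (t k))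
    (hTpos : ∀ i, 1 ≤ i → i ≤ d → 0 ≤ T i)
    (hTsq : ∀ i, 1 ≤ i → i ≤ d →
      HasSum (fun n : ℕ => μ ^ (2 * n) • ((t i) ^ (n + 1) * star ((t i) ^ (n + 1))))
        (T i ^ 2))
    (haii : ∀ i, 1 ≤ i → i ≤ d → a i i = T i * t i)
    (haij : ∀ i j, 1 ≤ j → j < i → i ≤ d →
      HasSum (fun n : ℕ => μ ^ n • ((t j) ^ n * a i (j + 1) * star ((t j) ^ n)))
        (a i j)) :
    ∀ i, 1 ≤ i → i ≤ d →
      (∀ k, 1 ≤ k → k ≤ d → k ≠ i → star (t k) * a i i = 0) ∧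
      (∀ k, 1 ≤ k → k < i → a i i * t k = 0) ∧
      (∀ j, j < i → P j * a i i = a i i) := by
  intro i hi1 hi2
  -- `star (t k) * T i = 0` for `k ≠ i`
  have hstarT : ∀ k, 1 ≤ k → k ≤ d → k ≠ i → star (t k) * T i = 0 := by
    intro k hk1 hk2 hk
    have h2 : star (t k) * T i ^ 2 = 0 := by
      have hs := (hTsq i hi1 hi2).mul_left (star (t k))
      have hz : (fun n : ℕ => star (t k) *
          (μ ^ (2 * n) • ((t i) ^ (n + 1) * star ((t i) ^ (n + 1))))) = fun _ => (0 : A) := by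
        funext n
        rw [mul_smul_comm, ← mul_assoc, pow_succ' (t i) n, ← mul_assoc,
          rel1 k i hk1 hk2 hi1 hi2 hk, zero_mul, zero_mul, smul_zero]
      rw [hz] at hs
      exact hs.unique hasSum_zero
    have hsa : star (T i) = T i := (IsSelfAdjoint.of_nonneg (hTpos i hi1 hi2)).star_eq
    have hxx : (star (t k) * T i) * star (star (t k) * T i) = 0 := by
      rw [star_mul, star_star, hsa, mul_assoc, ← mul_assoc (T i), ← sq, ← mul_assoc, h2,
        zero_mul]
    exact (CStarRing.mul_star_self_eq_zero_iff _).mp hxx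
  have h1 : ∀ k, 1 ≤ k → k ≤ d → k ≠ i → star (t k) * a i i = 0 := by
    intro k hk1 hk2 hk
    rw [haii i hi1 hi2, ← mul_assoc, hstarT k hk1 hk2 hk, zero_mul]
  refine ⟨h1, ?_, ?_⟩
  · intro k hk1 hk2
    rw [haii i hi1 hi2, mul_assoc, rel3 k i hk1 hk2 hi2, mul_zero]
  · intro j hj
    rw [hP j, sub_mul, one_mul, Finset.sum_mul]
    have : ∀ k ∈ Finset.Icc 1 j, t k * star (t k) * a i i = 0 := by
      intro k hk
      simp only [Finset.mem_Icc] at hk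
      rw [mul_assoc, h1 k hk.1 (le_trans hk.2 (le_trans hj.le hi2))
        (by omega), mul_zero]
    rw [Finset.sum_congr rfl this, Finset.sum_const_zero, sub_zero]
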